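/- For Gaussian measures P, Q on ℝ with densities p, q, the quantity Ψ(P,Q) = 2‖p − q‖²_{L²} / ((1 − ‖p‖²_{L²})(1 − ‖q‖²_{L²})) admits the closed form Ψ(P,Q) = [1/(σ_p√π) − 2√2·λ + 1/(σ_q√π)] / [(1 − 1/(2σ_p√π))(1 − 1/(2σ_q√π))], where λ = exp(−(μ_p − μ_q)²/(2(σ_p² + σ_q²))) / √(π(σ_p² + σ_q²)). -/

import Mathlib

open MeasureTheory Real

noncomputable def gaussianPdf (μ σ x : ℝ) : ℝ :=
  (σ * Real.sqrt (2 * Real.pi))⁻¹ * Real.exp (-((x - μ) ^ 2) / (2 * σ ^ 2))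

lemma integral_exp_shift (b c : ℝ) :
    ∫ x : ℝ, Real.exp (-b * (x - c) ^ 2) = Real.sqrt (Real.pi / b) := by
  rw [integral_sub_right_eq_self (μ := volume) (fun x => Real.exp (-b * x ^ 2)) c,
    integral_gaussian]

lemma integrable_exp_shift {b : ℝ} (hb : 0 < b) (c : ℝ) :
    Integrable (fun x : ℝ => Real.exp (-b * (x - c) ^ 2)) :=
  (integrable_exp_neg_mul_sq hb).comp_sub_right c

lemma pdf_sq_eq (μ σ : ℝ) (hσ : 0 < σ) :
    (fun x => gaussianPdf μ σ x ^ 2) =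
      fun x => (2 * Real.pi * σ ^ 2)⁻¹ * Real.exp (-(σ ^ 2)⁻¹ * (x - μ) ^ 2) := by
  funext x
  unfold gaussianPdf
  rw [mul_pow, inv_pow, mul_pow, sq_sqrt (by positivity : (0:ℝ) ≤ 2 * Real.pi),
    sq (Real.exp _), ← Real.exp_add]
  rw [show σ ^ 2 * (2 * Real.pi) = 2 * Real.pi * σ ^ 2 by ring]
  congr 1
  field_simp
  ring

lemma integral_pdf_sq (μ σ : ℝ) (hσ : 0 < σ) :
    ∫ x : ℝ, gaussianPdf μ σ x ^ 2 = 1 / (2 * σ * Real.sqrt Real.pi) := by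
  rw [pdf_sq_eq μ σ hσ, integral_const_mul, integral_exp_shift]
  rw [show Real.pi / (σ ^ 2)⁻¹ = Real.pi * σ ^ 2 from by field_simp,
    Real.sqrt_mul Real.pi_pos.le, Real.sqrt_sq hσ.le]
  have h : Real.sqrt Real.pi * Real.sqrt Real.pi = Real.pi :=
    Real.mul_self_sqrt Real.pi_pos.le
  have hs : Real.sqrt Real.pi > 0 := Real.sqrt_pos.mpr Real.pi_pos
  field_simp
  nlinarith [h, hs, hσ]

lemma integrable_pdf_sq (μ σ : ℝ) (hσ : 0 < σ) :
    Integrable (fun x : ℝ => gaussianPdf μ σ x ^ 2) := by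
  rw [pdf_sq_eq μ σ hσ]
  exact (integrable_exp_shift (by positivity) μ).const_mul _

lemma pdf_mul_eq (μp μq σp σq : ℝ) (hσp : 0 < σp) (hσq : 0 < σq) :
    (fun x => gaussianPdf μp σp x * gaussianPdf μq σq x) =
      fun x => (2 * Real.pi * (σp * σq))⁻¹ *
        Real.exp (-((μp - μq) ^ 2) / (2 * (σp ^ 2 + σq ^ 2))) *
        Real.exp (-((σp ^ 2 + σq ^ 2) / (2 * σp ^ 2 * σq ^ 2)) *
          (x - (μp * σq ^ 2 + μq * σp ^ 2) / (σp ^ 2 + σq ^ 2)) ^ 2) := by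
  funext x
  unfold gaussianPdf
  have hS : (0:ℝ) < σp ^ 2 + σq ^ 2 := by positivity
  rw [show (σp * Real.sqrt (2 * Real.pi))⁻¹ * Real.exp (-((x - μp) ^ 2) / (2 * σp ^ 2)) *
      ((σq * Real.sqrt (2 * Real.pi))⁻¹ * Real.exp (-((x - μq) ^ 2) / (2 * σq ^ 2))) =
      ((σp * Real.sqrt (2 * Real.pi)) * (σq * Real.sqrt (2 * Real.pi)))⁻¹ *
      (Real.exp (-((x - μp) ^ 2) / (2 * σp ^ 2)) * Real.exp (-((x - μq) ^ 2) / (2 * σq ^ 2)))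
      from by rw [mul_inv]; ring]
  rw [← Real.exp_add]
  conv_rhs => rw [mul_assoc, ← Real.exp_add]
  congr 1
  · rw [show σp * Real.sqrt (2 * Real.pi) * (σq * Real.sqrt (2 * Real.pi)) =
        (Real.sqrt (2 * Real.pi) * Real.sqrt (2 * Real.pi)) * (σp * σq) by ring,
      Real.mul_self_sqrt (by positivity)]
  · congr 1
    field_simp
    ring

lemma integral_pdf_mul (μp μq σp σq : ℝ) (hσp : 0 < σp) (hσq : 0 < σq) :
    ∫ x : ℝ, gaussianPdf μp σp x * gaussianPdf μq σq x =
      Real.exp (-((μp - μq) ^ 2) / (2 * (σp ^ 2 + σq ^ 2))) /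
        Real.sqrt (2 * Real.pi * (σp ^ 2 + σq ^ 2)) := by
  have hS : (0:ℝ) < σp ^ 2 + σq ^ 2 := by positivity
  rw [pdf_mul_eq μp μq σp σq hσp hσq]
  rw [show (fun x => (2 * Real.pi * (σp * σq))⁻¹ *
        Real.exp (-((μp - μq) ^ 2) / (2 * (σp ^ 2 + σq ^ 2))) *
        Real.exp (-((σp ^ 2 + σq ^ 2) / (2 * σp ^ 2 * σq ^ 2)) *
          (x - (μp * σq ^ 2 + μq * σp ^ 2) / (σp ^ 2 + σq ^ 2)) ^ 2)) =
      (fun x => ((2 * Real.pi * (σp * σq))⁻¹ *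
        Real.exp (-((μp - μq) ^ 2) / (2 * (σp ^ 2 + σq ^ 2)))) *
        Real.exp (-((σp ^ 2 + σq ^ 2) / (2 * σp ^ 2 * σq ^ 2)) *
          (x - (μp * σq ^ 2 + μq * σp ^ 2) / (σp ^ 2 + σq ^ 2)) ^ 2)) from rfl,
    integral_const_mul, integral_exp_shift]
  rw [show Real.pi / ((σp ^ 2 + σq ^ 2) / (2 * σp ^ 2 * σq ^ 2)) =
      (2 * Real.pi * (σp ^ 2 + σq ^ 2)) * (σp * σq / (σp ^ 2 + σq ^ 2)) ^ 2 from by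
        field_simp,
    Real.sqrt_mul (by positivity), Real.sqrt_sq (by positivity)]
  have hsq : Real.sqrt (2 * Real.pi * (σp ^ 2 + σq ^ 2)) *
      Real.sqrt (2 * Real.pi * (σp ^ 2 + σq ^ 2)) = 2 * Real.pi * (σp ^ 2 + σq ^ 2) :=
    Real.mul_self_sqrt (by positivity)
  have hspos : (0:ℝ) < Real.sqrt (2 * Real.pi * (σp ^ 2 + σq ^ 2)) :=
    Real.sqrt_pos.mpr (by positivity)
  set s := Real.sqrt (2 * Real.pi * (σp ^ 2 + σq ^ 2)) with hs
  rw [eq_div_iff hspos.ne']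
  have hπ : Real.pi > 0 := Real.pi_pos
  field_simp
  linear_combination hsq

lemma integrable_pdf_mul (μp μq σp σq : ℝ) (hσp : 0 < σp) (hσq : 0 < σq) :
    Integrable (fun x : ℝ => gaussianPdf μp σp x * gaussianPdf μq σq x) := by
  rw [pdf_mul_eq μp μq σp σq hσp hσq]
  exact (integrable_exp_shift (by positivity) _).const_mul _
theorem psi_closed_form (μp μq σp σq : ℝ)
    (hσp : σp > 1 / (2 * Real.sqrt Real.pi)) (hσq : σq > 1 / (2 * Real.sqrt Real.pi)) :
    (2 * ∫ x : ℝ, (gaussianPdf μp σp x - gaussianPdf μq σq x) ^ 2) /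
        ((1 - ∫ x : ℝ, (gaussianPdf μp σp x) ^ 2) * (1 - ∫ x : ℝ, (gaussianPdf μq σq x) ^ 2)) =
      (1 / (σp * Real.sqrt Real.pi) -
          2 * Real.sqrt 2 *
            (Real.exp (-((μp - μq) ^ 2) / (2 * (σp ^ 2 + σq ^ 2))) /
              Real.sqrt (Real.pi * (σp ^ 2 + σq ^ 2))) +
          1 / (σq * Real.sqrt Real.pi)) /
        ((1 - 1 / (2 * σp * Real.sqrt Real.pi)) * (1 - 1 / (2 * σq * Real.sqrt Real.pi))) := by
  have hπ : (0:ℝ) < Real.pi := Real.pi_pos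
  have hsπ : (0:ℝ) < Real.sqrt Real.pi := Real.sqrt_pos.mpr hπ
  have hσp0 : 0 < σp := lt_trans (by positivity) hσp
  have hσq0 : 0 < σq := lt_trans (by positivity) hσq
  have hS : (0:ℝ) < σp ^ 2 + σq ^ 2 := by positivity
  have hexp : ∫ x : ℝ, (gaussianPdf μp σp x - gaussianPdf μq σq x) ^ 2 =
      (∫ x : ℝ, (gaussianPdf μp σp x) ^ 2) -
        2 * (∫ x : ℝ, gaussianPdf μp σp x * gaussianPdf μq σq x) +
        ∫ x : ℝ, (gaussianPdf μq σq x) ^ 2 := by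
    have h1 := integrable_pdf_sq μp σp hσp0
    have h2 := integrable_pdf_mul μp μq σp σq hσp0 hσq0
    have h3 := integrable_pdf_sq μq σq hσq0
    calc ∫ x : ℝ, (gaussianPdf μp σp x - gaussianPdf μq σq x) ^ 2
        = ∫ x : ℝ, ((gaussianPdf μp σp x ^ 2 -
            2 * (gaussianPdf μp σp x * gaussianPdf μq σq x)) + gaussianPdf μq σq x ^ 2) := by
          congr 1; funext x; ring
      _ = _ := by
          have hsub : Integrable (fun x : ℝ => gaussianPdf μp σp x ^ 2 -
              2 * (gaussianPdf μp σp x * gaussianPdf μq σq x)) := h1.sub (h2.const_mul 2)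
          rw [integral_add hsub h3, integral_sub h1 (h2.const_mul 2), integral_const_mul]
  rw [hexp, integral_pdf_sq μp σp hσp0, integral_pdf_sq μq σq hσq0,
    integral_pdf_mul μp μq σp σq hσp0 hσq0]
  congr 1
  rw [show 2 * Real.pi * (σp ^ 2 + σq ^ 2) = 2 * (Real.pi * (σp ^ 2 + σq ^ 2)) by ring,
    Real.sqrt_mul (by norm_num : (0:ℝ) ≤ 2)]
  have h2 : Real.sqrt 2 * Real.sqrt 2 = 2 := Real.mul_self_sqrt (by norm_num)
  have hs2 : (0:ℝ) < Real.sqrt 2 := Real.sqrt_pos.mpr (by norm_num)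
  have hsS : (0:ℝ) < Real.sqrt (Real.pi * (σp ^ 2 + σq ^ 2)) :=
    Real.sqrt_pos.mpr (by positivity)
  set E := Real.exp (-((μp - μq) ^ 2) / (2 * (σp ^ 2 + σq ^ 2)))
  field_simp
  linear_combination (2 * σp * σq * Real.sqrt Real.pi * E) * h2
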